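/- Stiemke's Theorem: Let u_1, …, u_n be vectors in ℝ^m. Then either there exists α ∈ ℝ^n such that every component of the vector Σ_{i=1}^n α_i u_i is ≤ 0 and at least one component is strictly negative, or there exists w ∈ ℝ^m with all components strictly positive such that w · u_i = 0 for every i ∈ {1,…,n}. -/

import Mathlib

/-- **Stiemke's Theorem.** For vectors `u 1, …, u n` in `ℝ^m`, either there is a
linear combination `∑ i, α i • u i` all of whose components are `≤ 0` with at least
one strictly negative, or there is a strictly positive vector `w` orthogonal to
every `u i`. -/
theorem stmt_0 (m n : ℕ) (u : Fin n → Fin m → ℝ) :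
    (∃ α : Fin n → ℝ,
      (∀ j : Fin m, (∑ i, α i * u i j) ≤ 0) ∧ (∃ j : Fin m, (∑ i, α i * u i j) < 0)) ∨
    (∃ w : Fin m → ℝ, (∀ j, 0 < w j) ∧ ∀ i : Fin n, (∑ j, w j * u i j) = 0) := by
  set V : Submodule ℝ (Fin m → ℝ) := Submodule.span ℝ (Set.range u) with hV
  by_cases hne : ((V : Set (Fin m → ℝ)) ∩ stdSimplex ℝ (Fin m)).Nonempty
  · left
    obtain ⟨x, hxV, hxS⟩ := hne
    rw [hV, SetLike.mem_coe, Submodule.mem_span_range_iff_exists_fun ℝ] at hxV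
    obtain ⟨c, hc⟩ := hxV
    refine ⟨fun i => -c i, ?_, ?_⟩
    · intro j
      have hx : x j = ∑ i, c i * u i j := by
        rw [← hc]; simp [Finset.sum_apply]
      have h0 : 0 ≤ x j := hxS.1 j
      have : (∑ i, (-c i) * u i j) = -x j := by
        rw [hx, ← Finset.sum_neg_distrib]
        simp [neg_mul]
      rw [this]; linarith
    · have hsum : (∑ j, x j) = 1 := hxS.2
      have : ∃ j ∈ Finset.univ, (0:ℝ) < x j := by
        by_contra h
        push_neg at h
        have : (∑ j, x j) ≤ 0 := Finset.sum_nonpos (fun j hj => h j hj)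
        linarith
      obtain ⟨j, _, hj⟩ := this
      refine ⟨j, ?_⟩
      have hx : x j = ∑ i, c i * u i j := by
        rw [← hc]; simp [Finset.sum_apply]
      have : (∑ i, (-c i) * u i j) = -x j := by
        rw [hx, ← Finset.sum_neg_distrib]
        simp [neg_mul]
      rw [this]; linarith
  · right
    have hdisj : Disjoint (stdSimplex ℝ (Fin m)) (V : Set (Fin m → ℝ)) := by
      rw [Set.disjoint_right]
      intro x hxV hxS
      exact hne ⟨x, hxV, hxS⟩
    obtain ⟨f, a, b, hfa, hab, hfb⟩ :=
      geometric_hahn_banach_compact_closed (convex_stdSimplex ℝ (Fin m))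
        (isCompact_stdSimplex ℝ (Fin m)) V.convex
        V.closed_of_finiteDimensional hdisj
    -- f vanishes on V
    have hf0 : ∀ x ∈ V, f x = 0 := by
      intro x hx
      by_contra h
      have := hfb (((b - 1) / f x) • x) (V.smul_mem _ hx)
      rw [map_smul] at this
      simp only [smul_eq_mul] at this
      rw [div_mul_cancel₀ _ h] at this
      linarith
    have hb0 : b < 0 := by
      have := hfb 0 V.zero_mem
      simpa using this.trans_le (le_of_eq (map_zero f))
    refine ⟨fun j => -f (Pi.single j 1), ?_, ?_⟩
    · intro j
      have hmem : Pi.single j (1:ℝ) ∈ stdSimplex ℝ (Fin m) := by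
        constructor
        · intro k
          classical
          by_cases hk : k = j
          · subst hk; simp
          · simp [Pi.single_apply, hk]
        · simp [Finset.sum_pi_single']
      have := hfa _ hmem
      have h2 : f (Pi.single j 1) < 0 := by linarith
      show 0 < -f (Pi.single j 1)
      linarith
    · intro i
      have hui : u i ∈ V := Submodule.subset_span ⟨i, rfl⟩
      have hdecomp : u i = ∑ j, u i j • (Pi.single j 1 : Fin m → ℝ) := by
        funext k
        simp [Finset.sum_apply, Pi.single_apply, Finset.sum_ite_eq, mul_comm]
      have : f (u i) = ∑ j, u i j * f (Pi.single j 1) := by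
        conv_lhs => rw [hdecomp]
        rw [map_sum]
        simp [map_smul]
      have hz := hf0 _ hui
      rw [this] at hz
      calc (∑ j, (-f (Pi.single j 1)) * u i j)
          = -(∑ j, u i j * f (Pi.single j 1)) := by
            rw [← Finset.sum_neg_distrib]; congr 1; funext j; ring
        _ = 0 := by rw [hz, neg_zero]
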